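/- The sequence (α_k)_{k≥1} is strictly increasing and contained in [1/2, 1), and the sequence (β_k)_{k≥1} is strictly decreasing and contained in (1, 2]. Moreover, for all k ≥ 1, 1 + 1/k ≤ β_k ≤ 1 + 1/√k (equivalently, √k ≤ β_k^{k-1} ≤ k); hence β_k → 1 and α_k → 1 as k → ∞. -/
import Mathlib

open Filter Real

private lemma key_pow (k : ℕ) (hk : 1 ≤ k) : (1 + 1/(k:ℝ)) ^ (k-1) ≤ (k:ℝ) := by
  have hk0 : (0:ℝ) < k := by exact_mod_cast hk
  rcases lt_or_ge k 3 with h3 | h3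
  · interval_cases k <;> norm_num
  · have hk3 : (3:ℝ) ≤ k := by exact_mod_cast h3
    have hpos : (0:ℝ) ≤ 1/(k:ℝ) := by positivity
    have hbase : (1:ℝ) ≤ 1 + 1/(k:ℝ) := by linarith
    have h1 : (1 + 1/(k:ℝ)) ^ (k-1) ≤ (1 + 1/(k:ℝ)) ^ k :=
      pow_le_pow_right₀ hbase (Nat.sub_le k 1)
    have h2 : (1 + 1/(k:ℝ)) ^ k ≤ Real.exp (1/k) ^ k := by
      apply pow_le_pow_left₀ (by positivity)
      have := Real.add_one_le_exp (1/(k:ℝ))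
      linarith
    have h3' : Real.exp (1/(k:ℝ)) ^ k = Real.exp 1 := by
      rw [← Real.exp_nat_mul]
      congr 1
      field_simp
    have h4 : Real.exp 1 ≤ 3 := by
      have := Real.exp_one_lt_d9
      linarith
    linarith

theorem stmt9 (α β : ℕ → ℝ)
    (hα : ∀ k : ℕ, 1 ≤ k → 0 < α k ∧ (α k) ^ k + α k - 1 = 0)
    (hβ : ∀ k : ℕ, 1 ≤ k → 0 < β k ∧ (β k) ^ k - (β k) ^ (k - 1) - 1 = 0) :
    StrictMonoOn α {k : ℕ | 1 ≤ k} ∧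
    (∀ k : ℕ, 1 ≤ k → α k ∈ Set.Ico (1 / 2 : ℝ) 1) ∧
    StrictAntiOn β {k : ℕ | 1 ≤ k} ∧
    (∀ k : ℕ, 1 ≤ k → β k ∈ Set.Ioc (1 : ℝ) 2) ∧
    (∀ k : ℕ, 1 ≤ k → 1 + 1 / (k : ℝ) ≤ β k ∧ β k ≤ 1 + 1 / Real.sqrt k) ∧
    (∀ k : ℕ, 1 ≤ k → Real.sqrt k ≤ (β k) ^ (k - 1) ∧ (β k) ^ (k - 1) ≤ k) ∧
    Filter.Tendsto (fun k => β k) Filter.atTop (nhds 1) ∧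
    Filter.Tendsto (fun k => α k) Filter.atTop (nhds 1) := by
  -- basic facts about β
  have hbfact : ∀ k : ℕ, 1 ≤ k → 1 < β k ∧ (β k) ^ (k-1) * (β k - 1) = 1 := by
    intro k hk
    obtain ⟨hb0, heq⟩ := hβ k hk
    have hksub : k - 1 + 1 = k := Nat.succ_pred_eq_of_pos hk
    have hpow : (β k) ^ k = (β k) ^ (k-1) * β k := by
      calc (β k) ^ k = (β k) ^ (k-1+1) := by rw [hksub]
        _ = (β k) ^ (k-1) * β k := pow_succ _ _
    have hmul : (β k) ^ (k-1) * (β k - 1) = 1 := by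
      rw [mul_sub, ← hpow]; linarith
    have hppos : 0 < (β k) ^ (k-1) := pow_pos hb0 _
    constructor
    · by_contra hle
      push_neg at hle
      nlinarith
    · exact hmul
  -- bounds for β
  have hb_mem : ∀ k : ℕ, 1 ≤ k → β k ∈ Set.Ioc (1:ℝ) 2 := by
    intro k hk
    obtain ⟨hb1, hmul⟩ := hbfact k hk
    have hp1 : (1:ℝ) ≤ (β k) ^ (k-1) := one_le_pow₀ hb1.le
    exact ⟨hb1, by nlinarith⟩
  have hb_bounds : ∀ k : ℕ, 1 ≤ k → 1 + 1/(k:ℝ) ≤ β k ∧ β k ≤ 1 + 1/Real.sqrt k := by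
    intro k hk
    obtain ⟨hb1, hmul⟩ := hbfact k hk
    have hk0 : (0:ℝ) < k := by exact_mod_cast hk
    have hs1 : (1:ℝ) ≤ Real.sqrt k := by
      rw [show (1:ℝ) = Real.sqrt 1 by simp]
      exact Real.sqrt_le_sqrt (by exact_mod_cast hk)
    have hs0 : (0:ℝ) < Real.sqrt k := by linarith
    have hs2 : Real.sqrt k * Real.sqrt k = (k:ℝ) := Real.mul_self_sqrt hk0.le
    constructor
    · -- lower bound
      by_contra hlt
      push_neg at hlt
      have hble : β k ≤ 1 + 1/(k:ℝ) := hlt.le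
      have hpow : (β k) ^ (k-1) ≤ (1 + 1/(k:ℝ)) ^ (k-1) :=
        pow_le_pow_left₀ (by linarith) hble _
      have hkey := key_pow k hk
      have h1 : (β k) ^ (k-1) ≤ (k:ℝ) := le_trans hpow hkey
      have h2 : β k - 1 < 1/(k:ℝ) := by linarith
      have hA : (β k) ^ (k-1) * (β k - 1) ≤ (k:ℝ) * (β k - 1) :=
        mul_le_mul_of_nonneg_right h1 (by linarith)
      have hB : (k:ℝ) * (β k - 1) < (k:ℝ) * (1/(k:ℝ)) :=
        mul_lt_mul_of_pos_left h2 hk0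
      have hC : (k:ℝ) * (1/(k:ℝ)) = 1 := by field_simp
      linarith
    · -- upper bound
      by_contra hlt
      push_neg at hlt
      have hbern : 1 + (k-1 : ℕ) * (1/Real.sqrt k) ≤ (1 + 1/Real.sqrt k) ^ (k-1) :=
        one_add_mul_le_pow (le_trans (by norm_num) (by positivity : (0:ℝ) ≤ 1/Real.sqrt k)) _
      have hcast : ((k-1 : ℕ) : ℝ) = (k:ℝ) - 1 := by
        push_cast [Nat.cast_sub hk]
        ring
      rw [hcast] at hbern
      have hge : Real.sqrt k ≤ (1 + 1/Real.sqrt k) ^ (k-1) := by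
        have hstep : Real.sqrt k ≤ 1 + ((k:ℝ)-1) * (1/Real.sqrt k) := by
          rw [← sub_nonneg]
          have e : 1 + ((k:ℝ)-1) * (1/Real.sqrt k) - Real.sqrt k
              = (Real.sqrt k - 1) / Real.sqrt k := by
            field_simp
            nlinarith [hs2]
          rw [e]
          have : 0 ≤ Real.sqrt k - 1 := by linarith
          positivity
        linarith
      have hpow : (1 + 1/Real.sqrt k) ^ (k-1) ≤ (β k) ^ (k-1) :=
        pow_le_pow_left₀ (by positivity) hlt.le _
      have h1 : Real.sqrt k ≤ (β k) ^ (k-1) := le_trans hge hpow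
      have h2 : 1/Real.sqrt k < β k - 1 := by linarith
      have hA : Real.sqrt k * (1/Real.sqrt k) < Real.sqrt k * (β k - 1) :=
        mul_lt_mul_of_pos_left h2 hs0
      have hB : Real.sqrt k * (β k - 1) ≤ (β k) ^ (k-1) * (β k - 1) :=
        mul_le_mul_of_nonneg_right h1 (by nlinarith)
      have hC : Real.sqrt k * (1/Real.sqrt k) = 1 := by field_simp
      linarith
  -- pow bounds
  have hb_pow : ∀ k : ℕ, 1 ≤ k → Real.sqrt k ≤ (β k) ^ (k-1) ∧ (β k) ^ (k-1) ≤ (k:ℝ) := by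
    intro k hk
    obtain ⟨hb1, hmul⟩ := hbfact k hk
    obtain ⟨hlo, hhi⟩ := hb_bounds k hk
    have hk0 : (0:ℝ) < k := by exact_mod_cast hk
    have hs1 : (1:ℝ) ≤ Real.sqrt k := by
      rw [show (1:ℝ) = Real.sqrt 1 by simp]
      exact Real.sqrt_le_sqrt (by exact_mod_cast hk)
    have hs0 : (0:ℝ) < Real.sqrt k := by linarith
    have hd1 : β k - 1 ≤ 1/Real.sqrt k := by linarith
    have hd2 : 1/(k:ℝ) ≤ β k - 1 := by linarith
    have hd0 : 0 < β k - 1 := by linarith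
    constructor
    · have h1 : Real.sqrt k * (β k - 1) ≤ 1 := by
        calc Real.sqrt k * (β k - 1) ≤ Real.sqrt k * (1/Real.sqrt k) :=
              mul_le_mul_of_nonneg_left hd1 hs0.le
          _ = 1 := by field_simp
      nlinarith [pow_pos (show (0:ℝ) < β k by linarith) (k-1)]
    · have h1 : 1 ≤ (k:ℝ) * (β k - 1) := by
        calc (1:ℝ) = (k:ℝ) * (1/(k:ℝ)) := by field_simp
          _ ≤ (k:ℝ) * (β k - 1) := mul_le_mul_of_nonneg_left hd2 hk0.le
      nlinarith
  -- α basic facts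
  have hafact : ∀ k : ℕ, 1 ≤ k → α k ∈ Set.Ico (1/2 : ℝ) 1 := by
    intro k hk
    obtain ⟨ha0, heq⟩ := hα k hk
    have hpow : 0 < (α k) ^ k := pow_pos ha0 k
    have ha1 : α k < 1 := by nlinarith
    have hle : (α k) ^ k ≤ α k := pow_le_of_le_one ha0.le ha1.le (by omega)
    constructor
    · linarith
    · exact ha1
  -- α = 1/β
  have hab : ∀ k : ℕ, 1 ≤ k → α k = (β k)⁻¹ := by
    intro k hk
    obtain ⟨ha0, haeq⟩ := hα k hk
    obtain ⟨hb0, hbeq⟩ := hβ k hk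
    obtain ⟨hb1, hmul⟩ := hbfact k hk
    have hbne : β k ≠ 0 := by linarith
    have hinv0 : 0 < (β k)⁻¹ := by positivity
    have hksub : k - 1 + 1 = k := Nat.succ_pred_eq_of_pos hk
    have hbig : (β k)^k = (β k)^(k-1) + 1 := by linarith
    have hieq : ((β k)⁻¹) ^ k + (β k)⁻¹ - 1 = 0 := by
      have hbkne : (β k) ^ k ≠ 0 := pow_ne_zero _ hbne
      have : (β k) ^ k * (((β k)⁻¹) ^ k + (β k)⁻¹ - 1) = 0 := by
        have e1 : (β k) ^ k * ((β k)⁻¹) ^ k = 1 := by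
          rw [← mul_pow, mul_inv_cancel₀ hbne, one_pow]
        have e2 : (β k) ^ k * (β k)⁻¹ = (β k) ^ (k-1) := by
          calc (β k) ^ k * (β k)⁻¹ = (β k) ^ (k-1+1) * (β k)⁻¹ := by rw [hksub]
            _ = (β k) ^ (k-1) * (β k * (β k)⁻¹) := by ring
            _ = (β k) ^ (k-1) := by rw [mul_inv_cancel₀ hbne, mul_one]
        rw [mul_sub, mul_add, e1, e2, mul_one, hbig]
        ring
      rcases mul_eq_zero.mp this with h | h
      · exact absurd h hbkne
      · exact h
    -- uniqueness of positive root of x^k + x - 1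
    rcases lt_trichotomy (α k) ((β k)⁻¹) with h | h | h
    · exfalso
      have : (α k) ^ k < ((β k)⁻¹) ^ k := pow_lt_pow_left₀ h ha0.le (by omega)
      linarith
    · exact h
    · exfalso
      have : ((β k)⁻¹) ^ k < (α k) ^ k := pow_lt_pow_left₀ h hinv0.le (by omega)
      linarith
  -- strict mono α
  have hmono : StrictMonoOn α {k : ℕ | 1 ≤ k} := by
    intro m hm n hn hmn
    simp only [Set.mem_setOf_eq] at hm hn
    obtain ⟨ham0, ham⟩ := hα m hm
    obtain ⟨han0, han⟩ := hα n hn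
    have ham1 : α m < 1 := (hafact m hm).2
    by_contra hle
    push_neg at hle
    have h1 : (α n) ^ n ≤ (α m) ^ n := pow_le_pow_left₀ han0.le hle n
    have h2 : (α m) ^ n < (α m) ^ m :=
      pow_lt_pow_right_of_lt_one₀ ham0 ham1 hmn
    linarith
  -- strict anti β
  have hanti : StrictAntiOn β {k : ℕ | 1 ≤ k} := by
    intro m hm n hn hmn
    simp only [Set.mem_setOf_eq] at hm hn
    obtain ⟨hbm1, hmulm⟩ := hbfact m hm
    obtain ⟨hbn1, hmuln⟩ := hbfact n hn
    by_contra hle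
    push_neg at hle
    -- hle : β m ≤ β n, derive contradiction
    have hesplit : (m - 1) + (n - m) = n - 1 := by omega
    have hfac : (β m) ^ (n-1) = (β m) ^ (m-1) * (β m) ^ (n-m) := by
      rw [← pow_add, hesplit]
    have hgt1 : 1 < (β m) ^ (n-m) := one_lt_pow₀ hbm1 (by omega)
    have hval : 1 < (β m) ^ (n-1) * (β m - 1) := by
      rw [hfac]
      calc (1:ℝ) < (β m) ^ (n-m) := hgt1
        _ = (β m) ^ (n-m) * ((β m) ^ (m-1) * (β m - 1)) := by rw [hmulm, mul_one]
        _ = (β m) ^ (m-1) * (β m) ^ (n-m) * (β m - 1) := by ring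
    have hp1 : (β m) ^ (n-1) ≤ (β n) ^ (n-1) := pow_le_pow_left₀ (by linarith) hle _
    have hp2 : β m - 1 ≤ β n - 1 := by linarith
    have hfin : (β m) ^ (n-1) * (β m - 1) ≤ (β n) ^ (n-1) * (β n - 1) := by
      apply mul_le_mul hp1 hp2 (by linarith)
      positivity
    linarith
  -- tendsto β
  have hsqrt_atTop : Tendsto (fun k : ℕ => Real.sqrt k) atTop atTop := by
    have h1 : Tendsto (fun x : ℝ => x ^ (1/2 : ℝ)) atTop atTop :=
      tendsto_rpow_atTop (by norm_num)
    have h2 := h1.comp tendsto_natCast_atTop_atTop (α := ℕ)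
    refine h2.congr fun k => ?_
    simp [Real.sqrt_eq_rpow, Function.comp]
  have hubound : Tendsto (fun k : ℕ => 1 + 1/Real.sqrt k) atTop (nhds 1) := by
    have h1 : Tendsto (fun k : ℕ => (Real.sqrt k)⁻¹) atTop (nhds 0) :=
      tendsto_inv_atTop_zero.comp hsqrt_atTop
    have h2 := h1.const_add 1
    simpa [one_div] using h2
  have htendb : Tendsto (fun k => β k) atTop (nhds 1) := by
    have hev1 : ∀ᶠ k : ℕ in atTop, 1 ≤ β k := by
      filter_upwards [eventually_ge_atTop 1] with k hk
      exact (hb_mem k hk).1.le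
    have hev2 : ∀ᶠ k : ℕ in atTop, β k ≤ 1 + 1/Real.sqrt k := by
      filter_upwards [eventually_ge_atTop 1] with k hk
      exact (hb_bounds k hk).2
    exact tendsto_of_tendsto_of_tendsto_of_le_of_le' tendsto_const_nhds hubound hev1 hev2
  -- tendsto α
  have htenda : Tendsto (fun k => α k) atTop (nhds 1) := by
    have h1 : Tendsto (fun k : ℕ => (β k)⁻¹) atTop (nhds 1) := by
      have := htendb.inv₀ (one_ne_zero)
      simpa using this
    refine h1.congr' ?_
    filter_upwards [eventually_ge_atTop 1] with k hk
    exact (hab k hk).symm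
  exact ⟨hmono, hafact, hanti, hb_mem, hb_bounds, hb_pow, htendb, htenda⟩
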